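/- Let T be a rigid object in the skeletally small category C and let L_S : C → C_S be the Gabriel–Zisman localisation of C at the class S. For every object Y of C_S there is an object X of C(T) such that X ≅ Y in C_S. -/

import Mathlib

/-!
Common setup: `C` is a Hom-finite, Krull-Schmidt (= idempotent complete, given
Hom-finiteness over a field), `k`-linear triangulated category with suspension
functor `Σ = shiftFunctor C (1 : ℤ)`, and `T` is a rigid object of `C`.
-/

noncomputable section

open CategoryTheory CategoryTheory.Limits CategoryTheory.Pretriangulated

universe v u

namespace PaperBM

variable {C : Type u} [Category.{v} C] [Preadditive C] [HasZeroObject C]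
  [HasShift C ℤ] [∀ n : ℤ, (shiftFunctor C n).Additive] [Pretriangulated C]
  [HasFiniteBiproducts C]

/-- `X` lies in `add T`: it is a direct summand of a finite direct sum of copies of `T`. -/
def memAdd (T X : C) : Prop :=
  ∃ (n : ℕ) (s : X ⟶ ⨁ (fun _ : Fin n => T)) (r : (⨁ fun _ : Fin n => T) ⟶ X), s ≫ r = 𝟙 X

/-- `T` is rigid: `Hom_C(T, ΣT) = 0`. -/
def IsRigidObj (T : C) : Prop := ∀ f : T ⟶ (shiftFunctor C (1 : ℤ)).obj T, f = 0

/-- `Y ∈ T^⊥`, i.e. `Hom_C(X, ΣY) = 0` for all `X ∈ add T`. -/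
def memTperp (T Y : C) : Prop :=
  ∀ (X : C), memAdd T X → ∀ f : X ⟶ (shiftFunctor C (1 : ℤ)).obj Y, f = 0

/-- `Y ∈ ⊥T`, i.e. `Hom_C(Y, ΣX) = 0` for all `X ∈ add T`. -/
def memPerpT (T Y : C) : Prop :=
  ∀ (X : C), memAdd T X → ∀ f : Y ⟶ (shiftFunctor C (1 : ℤ)).obj X, f = 0

/-- `Y ∈ ΣT^⊥`, the image of `T^⊥` under the suspension `Σ`. -/
def memSigmaTperp (T Y : C) : Prop :=
  ∃ Z : C, memTperp T Z ∧ Nonempty (Y ≅ (shiftFunctor C (1 : ℤ)).obj Z)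

/-- The map `f` factors through an object belonging to the class `P` of objects. -/
def FactorsThru (P : C → Prop) {A B : C} (f : A ⟶ B) : Prop :=
  ∃ (Z : C) (g : A ⟶ Z) (h : Z ⟶ B), P Z ∧ g ≫ h = f

/-- The class `S̃` of maps `f : X ⟶ Y` such that in a completion
`Σ⁻¹Z →h X →f Y →g Z` of `f` to a triangle (where `A` plays the role of `Σ⁻¹Z`,
so that `Z = ΣA`), both `g` and `h` factor through an object of `ΣT^⊥`. -/
def Stilde (T : C) : MorphismProperty C := fun X Y f =>
  ∃ (A : C) (h : A ⟶ X) (g : Y ⟶ (shiftFunctor C (1 : ℤ)).obj A),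
    (Triangle.mk h f g ∈ distTriang C) ∧
    FactorsThru (memSigmaTperp T) g ∧ FactorsThru (memSigmaTperp T) h

/-- The class `S` of maps `f : X ⟶ Y` such that in a completion
`Σ⁻¹Z →h X →f Y →g Z` of `f` to a triangle (where `A` plays the role of `Σ⁻¹Z`,
so that `Z = ΣA`), `g` factors through an object of `ΣT^⊥` and `Σ⁻¹Z ∈ ΣT^⊥`. -/
def Sclass (T : C) : MorphismProperty C := fun X Y f =>
  ∃ (A : C) (h : A ⟶ X) (g : Y ⟶ (shiftFunctor C (1 : ℤ)).obj A),
    (Triangle.mk h f g ∈ distTriang C) ∧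
    FactorsThru (memSigmaTperp T) g ∧ memSigmaTperp T A

/-- `X ∈ C(T)`: there is a triangle `T₁ → T₀ → X → ΣT₁` with `T₀, T₁ ∈ add T`. -/
def memCT (T X : C) : Prop :=
  ∃ (T₁ T₀ : C) (a : T₁ ⟶ T₀) (b : T₀ ⟶ X) (c : X ⟶ (shiftFunctor C (1 : ℤ)).obj T₁),
    memAdd T T₁ ∧ memAdd T T₀ ∧ (Triangle.mk a b c ∈ distTriang C)

/-- `f : X₀ ⟶ Y` is a right `P`-approximation of `Y`. -/
def IsRightApprox (P : C → Prop) {X₀ Y : C} (f : X₀ ⟶ Y) : Prop :=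
  P X₀ ∧ ∀ (W : C), P W → ∀ g : W ⟶ Y, ∃ g' : W ⟶ X₀, g' ≫ f = g

/-- `f : Y ⟶ X₀` is a left `P`-approximation of `Y`. -/
def IsLeftApprox (P : C → Prop) {Y X₀ : C} (f : Y ⟶ X₀) : Prop :=
  P X₀ ∧ ∀ (W : C), P W → ∀ g : Y ⟶ W, ∃ g' : X₀ ⟶ W, f ≫ g' = g

/-- The map `f : X₀ ⟶ Y` is right minimal. -/
def IsRightMinimal {X₀ Y : C} (f : X₀ ⟶ Y) : Prop :=
  ∀ g : X₀ ⟶ X₀, g ≫ f = f → IsIso g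

/-- The functor `H = Hom_C(T, -) : C ⥤ Mod End_C(T)ᵒᵖ`.  Here, with Mathlib's
conventions, the endomorphism ring `End (Opposite.op T)` of `T` viewed in `Cᵒᵖ` plays
the role of `End_C(T)ᵒᵖ`, so that each `Hom_C(T, X)` is a left module over it. -/
abbrev homFunctor (T : C) : C ⥤ ModuleCat.{v} (End (Opposite.op T)) :=
  preadditiveCoyonedaObj T ⋙ ModuleCat.restrictScalars
    { toFun := fun r => MulOpposite.op r.unop
      map_one' := rfl
      map_mul' := fun _ _ => rfl
      map_zero' := rfl
      map_add' := fun _ _ => rfl }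

/-- The predicate on `End_C(T)ᵒᵖ`-modules of being finite-dimensional (equivalently,
since `End_C(T)` is a finite-dimensional algebra, finitely generated). -/
abbrev isFinDim (T : C) : ModuleCat.{v} (End (Opposite.op T)) → Prop :=
  fun M => Module.Finite (End (Opposite.op T)) M

/-- The category `mod End_C(T)ᵒᵖ` of finite-dimensional `End_C(T)ᵒᵖ`-modules. -/
abbrev fdMod (T : C) := ObjectProperty.FullSubcategory (isFinDim T)

/-- The ideal relation on `C(T)` of maps factoring through an object of `ΣT^⊥`. -/
def homRelCT (T : C) : HomRel (ObjectProperty.FullSubcategory (memCT T)) :=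
  fun A B f g => FactorsThru (memSigmaTperp T) ((f.hom - g.hom : A.obj ⟶ B.obj))

/-- The ideal relation on `C(T)` of maps factoring through an object of `add ΣT`. -/
def homRelCTadd (T : C) : HomRel (ObjectProperty.FullSubcategory (memCT T)) :=
  fun A B f g => FactorsThru (memAdd ((shiftFunctor C (1 : ℤ)).obj T)) ((f.hom - g.hom : A.obj ⟶ B.obj))

/-- The ideal relation on `C` of maps factoring through an object of `add ΣT`. -/
def homRelAdd (T : C) : HomRel C :=
  fun A B f g => FactorsThru (memAdd ((shiftFunctor C (1 : ℤ)).obj T)) (f - g)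

/-! ### Auxiliary lemmas for statement_10 -/

section Aux

variable {T : C}

lemma memAdd_biproduct (T : C) (n : ℕ) : memAdd T (⨁ fun _ : Fin n => T) :=
  ⟨n, 𝟙 _, 𝟙 _, Category.comp_id _⟩

lemma hom_T_shift_zero (hT : IsRigidObj T) (m : ℕ)
    (u : T ⟶ (shiftFunctor C (1 : ℤ)).obj (⨁ fun _ : Fin m => T)) : u = 0 := by
  have h1 : u = u ≫ (shiftFunctor C (1 : ℤ)).map
      (∑ j : Fin m, biproduct.π (fun _ : Fin m => T) j ≫ biproduct.ι (fun _ : Fin m => T) j) := by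
    rw [biproduct.total]; simp
  rw [h1, Functor.map_sum, Preadditive.comp_sum]
  refine Finset.sum_eq_zero (fun j _ => ?_)
  rw [Functor.map_comp, ← Category.assoc, hT (u ≫ _), zero_comp]

lemma hom_shift_zero (hT : IsRigidObj T) {W V : C} (hW : memAdd T W) (hV : memAdd T V)
    (f : W ⟶ (shiftFunctor C (1 : ℤ)).obj V) : f = 0 := by
  obtain ⟨n, s, r, hsr⟩ := hW
  obtain ⟨m, s', r', hsr'⟩ := hV
  have h2 : r ≫ f ≫ (shiftFunctor C (1 : ℤ)).map s' = 0 := by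
    apply biproduct.hom_ext'
    intro j
    rw [comp_zero]
    exact hom_T_shift_zero hT m _
  calc f = (s ≫ r) ≫ f ≫ (shiftFunctor C (1 : ℤ)).map (s' ≫ r') := by
          rw [hsr, hsr']; simp
    _ = s ≫ (r ≫ f ≫ (shiftFunctor C (1 : ℤ)).map s') ≫ (shiftFunctor C (1 : ℤ)).map r' := by
          rw [Functor.map_comp]; simp
    _ = 0 := by rw [h2]; simp

lemma exists_approx {k : Type*} [Field k] [CategoryTheory.Linear k C]
    [∀ X Y : C, FiniteDimensional k (X ⟶ Y)] (T Y : C) :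
    ∃ (n : ℕ) (β : (⨁ fun _ : Fin n => T) ⟶ Y),
      ∀ W, memAdd T W → ∀ g : W ⟶ Y, ∃ g', g' ≫ β = g := by
  obtain ⟨n, f, hf⟩ := Module.Finite.exists_fin (R := k) (M := T ⟶ Y)
  refine ⟨n, biproduct.desc f, ?_⟩
  have liftT : ∀ g : T ⟶ Y, ∃ g' : T ⟶ ⨁ (fun _ : Fin n => T),
      g' ≫ biproduct.desc f = g := by
    intro g
    have hg : g ∈ Submodule.span k (Set.range f) := hf ▸ Submodule.mem_top
    obtain ⟨cf, hcf⟩ := (Submodule.mem_span_range_iff_exists_fun k).1 hg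
    refine ⟨∑ i, cf i • biproduct.ι (fun _ : Fin n => T) i, ?_⟩
    rw [Preadditive.sum_comp]
    simp only [Linear.smul_comp, biproduct.ι_desc]
    exact hcf
  rintro W ⟨m, s, r, hsr⟩ g
  choose l hl using liftT
  refine ⟨s ≫ biproduct.desc (fun j => l (biproduct.ι (fun _ : Fin m => T) j ≫ r ≫ g)), ?_⟩
  have key : biproduct.desc (fun j => l (biproduct.ι (fun _ : Fin m => T) j ≫ r ≫ g)) ≫
      biproduct.desc f = r ≫ g := by
    apply biproduct.hom_ext'
    intro j
    rw [← Category.assoc, biproduct.ι_desc, hl]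
  rw [Category.assoc, key, ← Category.assoc, hsr, Category.id_comp]

lemma exists_CT_approx {k : Type*} [Field k] [CategoryTheory.Linear k C]
    [∀ X Y : C, FiniteDimensional k (X ⟶ Y)] (T : C) (hT : IsRigidObj T) (X : C) :
    ∃ (X' : C) (c : X' ⟶ X), memCT T X' ∧ Sclass T c := by
  classical
  obtain ⟨n₀, β, hβ⟩ := exists_approx (k := k) T X
  obtain ⟨X₁, g, h, htri2⟩ := distinguished_cocone_triangle₁ β
  obtain ⟨n₁, α, hα⟩ := exists_approx (k := k) T X₁
  obtain ⟨X', p, q, htri1⟩ := distinguished_cocone_triangle (α ≫ g)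
  have hmemT0 : memAdd T (⨁ fun _ : Fin n₀ => T) := memAdd_biproduct T n₀
  have hmemT1 : memAdd T (⨁ fun _ : Fin n₁ => T) := memAdd_biproduct T n₁
  obtain ⟨c, hc1, hc2⟩ : ∃ c : X' ⟶ X, p ≫ c = 𝟙 _ ≫ β ∧
      q ≫ (shiftFunctor C (1 : ℤ)).map α = c ≫ h := complete_distinguished_triangle_morphism
    (Triangle.mk (α ≫ g) p q) (Triangle.mk g β h) htri1 htri2
    α (𝟙 _) (Category.comp_id _)
  have hpc : p ≫ c = β := by simpa using hc1
  obtain ⟨A, h', γ, htri3⟩ := distinguished_cocone_triangle₁ c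
  -- X₁ ∈ T^⊥
  have hX₁ : memTperp T X₁ := by
    intro W hW u
    have h0 : u ≫ ((Triangle.mk g β h).rotate).mor₃ = 0 := by
      have h0' : u ≫ ((Triangle.mk g β h).rotate).mor₃ =
          -(u ≫ (shiftFunctor C (1 : ℤ)).map g) := by
        simp [Triangle.rotate]
        exact Preadditive.comp_neg _ _
      rw [h0', hom_shift_zero hT hW hmemT0 (u ≫ (shiftFunctor C (1 : ℤ)).map g), neg_zero]
      rfl
    obtain ⟨v, hv⟩ : ∃ v : W ⟶ X, u = v ≫ h :=
      Triangle.coyoneda_exact₃ _ (rot_of_distTriang _ htri2) u h0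
    obtain ⟨t, ht⟩ := hβ W hW v
    have hβh : β ≫ h = 0 := comp_distTriang_mor_zero₂₃ _ htri2
    calc u = v ≫ h := hv
      _ = t ≫ β ≫ h := by rw [← ht, Category.assoc]
      _ = 0 := by rw [hβh, comp_zero]
  -- the triangle morphism tri1 ⟶ tri2 and its inverse rotations
  let ψ : Triangle.mk (α ≫ g) p q ⟶ Triangle.mk g β h :=
    { hom₁ := α
      hom₂ := 𝟙 _
      hom₃ := c
      comm₁ := Category.comp_id _
      comm₂ := hc1
      comm₃ := hc2 }
  have iψcomm : (Triangle.mk (α ≫ g) p q).invRotate.mor₁ ≫ α =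
      (shiftFunctor C (-1 : ℤ)).map c ≫ (Triangle.mk g β h).invRotate.mor₁ :=
    ((invRotate C).map ψ).comm₁
  have iiψcomm : (Triangle.mk (α ≫ g) p q).invRotate.invRotate.mor₁ ≫
      (shiftFunctor C (-1 : ℤ)).map c =
      (shiftFunctor C (-1 : ℤ)).map (𝟙 _) ≫
        (Triangle.mk g β h).invRotate.invRotate.mor₁ :=
    ((invRotate C).map ((invRotate C).map ψ)).comm₁
  -- surjectivity of Hom(W, Σ⁻¹ c)
  have hsurj : ∀ (W : C), memAdd T W →
      ∀ d : W ⟶ (shiftFunctor C (-1 : ℤ)).obj X,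
      ∃ d' : W ⟶ (shiftFunctor C (-1 : ℤ)).obj X',
        d' ≫ (shiftFunctor C (-1 : ℤ)).map c = d := by
    intro W hW d
    obtain ⟨s', hs'⟩ := hα W hW (d ≫ (Triangle.mk g β h).invRotate.mor₁)
    have h1 : s' ≫ (Triangle.mk (α ≫ g) p q).invRotate.mor₂ = 0 := by
      have hz : (Triangle.mk g β h).invRotate.mor₁ ≫ (Triangle.mk g β h).invRotate.mor₂ = 0 :=
        comp_distTriang_mor_zero₁₂ _ (inv_rot_of_distTriang _ htri2)
      have hz2 : (Triangle.mk g β h).invRotate.mor₁ ≫ g = 0 := hz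
      have h1' : s' ≫ (Triangle.mk (α ≫ g) p q).invRotate.mor₂ = (s' ≫ α) ≫ g := by
        simp [Triangle.invRotate]
        rfl
      rw [h1', hs']
      erw [Category.assoc, hz2, comp_zero]
      rfl
    obtain ⟨e, he⟩ : ∃ e : W ⟶ (shiftFunctor C (-1 : ℤ)).obj X',
        s' = e ≫ (Triangle.mk (α ≫ g) p q).invRotate.mor₁ :=
      Triangle.coyoneda_exact₂ _ (inv_rot_of_distTriang _ htri1) s' h1
    have h2 : (d - e ≫ (shiftFunctor C (-1 : ℤ)).map c) ≫
        (Triangle.mk g β h).invRotate.invRotate.mor₂ = 0 := by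
      have hm : (Triangle.mk g β h).invRotate.invRotate.mor₂ =
          (Triangle.mk g β h).invRotate.mor₁ := rfl
      erw [hm, Preadditive.sub_comp, Category.assoc, ← iψcomm, ← Category.assoc, ← he, hs',
        sub_self]
    obtain ⟨t, ht⟩ : ∃ t : W ⟶ (shiftFunctor C (-1 : ℤ)).obj ((Triangle.mk g β h).obj₂),
        d - e ≫ (shiftFunctor C (-1 : ℤ)).map c =
          t ≫ (Triangle.mk g β h).invRotate.invRotate.mor₁ :=
      Triangle.coyoneda_exact₂ _
        (inv_rot_of_distTriang _ (inv_rot_of_distTriang _ htri2))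
        (d - e ≫ (shiftFunctor C (-1 : ℤ)).map c) h2
    refine ⟨e + (t ≫ (Triangle.mk (α ≫ g) p q).invRotate.invRotate.mor₁ :
      W ⟶ (shiftFunctor C (-1 : ℤ)).obj X'), ?_⟩
    erw [Preadditive.add_comp, Category.assoc, iiψcomm]
    erw [CategoryTheory.Functor.map_id, Category.id_comp]
    erw [← ht]
    abel
  -- Hom(add T, A) = 0
  have hA : ∀ W, memAdd T W → ∀ u : W ⟶ A, u = 0 := by
    intro W hW u
    -- step (i) : u ≫ h' = 0
    have hv : (u ≫ h') ≫ c = 0 := by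
      rw [Category.assoc]
      have hz : h' ≫ c = 0 := comp_distTriang_mor_zero₁₂ _ htri3
      rw [hz, comp_zero]
    have hq : (u ≫ h') ≫ q = 0 := hom_shift_zero hT hW hmemT1 _
    obtain ⟨t, htp⟩ : ∃ t : W ⟶ ⨁ (fun _ : Fin n₀ => T), u ≫ h' = t ≫ p :=
      Triangle.coyoneda_exact₃ _ htri1 (u ≫ h') hq
    have htβ : t ≫ β = 0 := by
      rw [← hpc, ← Category.assoc, ← htp]
      exact hv
    obtain ⟨s, hs⟩ : ∃ s : W ⟶ X₁, t = s ≫ g :=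
      Triangle.coyoneda_exact₂ _ htri2 t htβ
    obtain ⟨s', hs'⟩ := hα W hW s
    have hv0 : u ≫ h' = 0 := by
      have hz : (α ≫ g) ≫ p = 0 := comp_distTriang_mor_zero₁₂ _ htri1
      calc u ≫ h' = t ≫ p := htp
        _ = (s ≫ g) ≫ p := by rw [← hs]
        _ = ((s' ≫ α) ≫ g) ≫ p := by rw [hs']
        _ = s' ≫ (α ≫ g) ≫ p := by simp only [Category.assoc]
        _ = 0 := by rw [hz, comp_zero]
    -- step (ii)
    have hv0' : u ≫ (Triangle.mk h' c γ).invRotate.mor₂ = 0 := hv0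
    obtain ⟨d, hd⟩ : ∃ d : W ⟶ (shiftFunctor C (-1 : ℤ)).obj X,
        u = d ≫ (Triangle.mk h' c γ).invRotate.mor₁ :=
      Triangle.coyoneda_exact₂ _ (inv_rot_of_distTriang _ htri3) u hv0'
    obtain ⟨d', hd'⟩ := hsurj W hW d
    have hkill : (shiftFunctor C (-1 : ℤ)).map c ≫ (Triangle.mk h' c γ).invRotate.mor₁ = 0 := by
      have hcγ : c ≫ γ = 0 := comp_distTriang_mor_zero₂₃ _ htri3
      have hm : (Triangle.mk h' c γ).invRotate.mor₁ = -(shiftFunctor C (-1 : ℤ)).map γ ≫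
          (shiftEquiv C (1 : ℤ)).unitIso.inv.app A := rfl
      rw [hm]
      erw [Preadditive.comp_neg, ← Category.assoc,
        ← Functor.map_comp, hcγ, Functor.map_zero, zero_comp, neg_zero]
    erw [hd, ← hd', Category.assoc, hkill, comp_zero]
    rfl
  refine ⟨X', c, ⟨_, _, α ≫ g, p, q, hmemT1, hmemT0, htri1⟩, A, h', γ, htri3, ?_, ?_⟩
  · -- γ factors through ΣX₁ ∈ ΣT^⊥
    have hβγ : β ≫ γ = 0 := by
      rw [← hpc, Category.assoc]
      have hz : c ≫ γ = 0 := comp_distTriang_mor_zero₂₃ _ htri3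
      rw [hz, comp_zero]
    obtain ⟨t, htfac⟩ : ∃ t : (shiftFunctor C (1 : ℤ)).obj X₁ ⟶ (shiftFunctor C (1 : ℤ)).obj A,
        γ = h ≫ t := Triangle.yoneda_exact₃ _ htri2 γ hβγ
    exact ⟨(shiftFunctor C (1 : ℤ)).obj X₁, h, t, ⟨X₁, hX₁, ⟨Iso.refl _⟩⟩, htfac.symm⟩
  · -- A ∈ ΣT^⊥
    refine ⟨(shiftFunctor C (-1 : ℤ)).obj A, ?_,
      ⟨((shiftEquiv C (1 : ℤ)).counitIso.app A).symm⟩⟩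
    intro W hW f
    have h0 : f ≫ ((shiftEquiv C (1 : ℤ)).counitIso.app A).hom = 0 := hA W hW _
    have h1 := h0 =≫ ((shiftEquiv C (1 : ℤ)).counitIso.app A).inv
    erw [Category.assoc, Iso.hom_inv_id, Category.comp_id, zero_comp] at h1
    exact h1

end Aux

end PaperBM

open PaperBM

/-- Every object of the Gabriel–Zisman localisation `C_S` of `C` at the class `S` is
isomorphic, in `C_S`, to (the image of) an object of `C(T)`. -/
theorem statement_10 {C : Type u} [Category.{v} C] [Preadditive C] [HasZeroObject C]
    [HasShift C ℤ] [∀ n : ℤ, (shiftFunctor C n).Additive] [Pretriangulated C]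
    [HasFiniteBiproducts C]
    {k : Type*} [Field k] [CategoryTheory.Linear k C]
    [∀ X Y : C, FiniteDimensional k (X ⟶ Y)] [IsIdempotentComplete C]
    [EssentiallySmall.{v} C] (T : C) (hT : IsRigidObj T)
    (Y : (Sclass T).Localization) :
    ∃ X : C, memCT T X ∧ Nonempty ((Sclass T).Q.obj X ≅ Y) := by
  obtain ⟨X', c, hX', hc⟩ := exists_CT_approx (k := k) T hT
    ((Localization.Construction.objEquiv (Sclass T)).symm Y)
  exact ⟨X', hX', ⟨Localization.Construction.wIso c hc ≪≫
    eqToIso ((Localization.Construction.objEquiv (Sclass T)).apply_symm_apply Y)⟩⟩
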